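/- Every stationary distribution f of the exogenous innovation–imitation model satisfies f^s = Q_s · f^1 for all 1 ≤ s ≤ m, and consequently f^1 = (Σ_{s=1}^m Q_s)^{-1}. -/

import Mathlib

/-- The transition matrix of the exogenous innovation–imitation model
(0-indexed: level `i : Fin m` corresponds to productivity level `i+1`). -/
def transMatrix (m : ℕ) (a : ℝ) (q : Fin m → ℝ) : Matrix (Fin m) (Fin m) ℝ :=
  fun i j =>
    (if (j : ℕ) = 0 then q i * (1 - a) else 0) +
    (if i = j then a else 0) +
    (if (j : ℕ) = (i : ℕ) + 1 then 1 - a else 0)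

/-- `Q_s = q_s + q_{s+1} + ⋯ + q_m` (0-indexed). -/
def tailQ (m : ℕ) (q : Fin m → ℝ) (s : Fin m) : ℝ := ∑ j ∈ Finset.Ici s, q j

/-- A stationary distribution of the exogenous innovation–imitation model. -/
def IsStationaryInnovImit (m : ℕ) (a : ℝ) (q : Fin m → ℝ) (f : Fin m → ℝ) : Prop :=
  (∀ i, 0 ≤ f i) ∧ (∑ i, f i = 1) ∧ (transMatrix m a q).mulVec f = f

theorem stmt1 (m : ℕ) (hm : 1 ≤ m) (a : ℝ) (ha : a ∈ Set.Ioo (0 : ℝ) 1)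
    (q : Fin m → ℝ) (hq : ∀ i, q i ∈ Set.Icc (0 : ℝ) 1) (hqsum : ∑ i, q i = 1)
    (f : Fin m → ℝ) (hf : IsStationaryInnovImit m a q f) :
    (∀ s, f s = tailQ m q s * f ⟨0, hm⟩) ∧
      f ⟨0, hm⟩ = (∑ s, tailQ m q s)⁻¹ := by
  obtain ⟨hpos, hsum, hstat⟩ := hf
  have ha1 : (1:ℝ) - a ≠ 0 := by have := ha.2; intro h; linarith
  have key : ∀ i : Fin m, f i = q i * f ⟨0, hm⟩ +
      (if h : (i:ℕ)+1 < m then f ⟨(i:ℕ)+1, h⟩ else 0) := by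
    intro i
    have h1 := congrFun hstat i
    rw [Matrix.mulVec, dotProduct] at h1
    simp only [transMatrix, add_mul, Finset.sum_add_distrib] at h1
    have s1 : ∑ j : Fin m, (if (j:ℕ) = 0 then q i * (1-a) else 0) * f j
        = q i * (1-a) * f ⟨0, hm⟩ := by
      rw [Finset.sum_eq_single ⟨0, hm⟩]
      · simp
      · intro b _ hb; rw [if_neg, zero_mul]; intro hb0; exact hb (Fin.ext hb0)
      · simp
    have s2 : ∑ j : Fin m, (if i = j then a else 0) * f j = a * f i := by
      rw [Finset.sum_eq_single i]
      · simp
      · intro b _ hb; rw [if_neg, zero_mul]; exact fun h => hb h.symm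
      · simp
    have s3 : ∑ j : Fin m, (if (j:ℕ) = (i:ℕ)+1 then 1-a else 0) * f j
        = if h : (i:ℕ)+1 < m then (1-a) * f ⟨(i:ℕ)+1, h⟩ else 0 := by
      split
      next h =>
        rw [Finset.sum_eq_single ⟨(i:ℕ)+1, h⟩]
        · simp
        · intro b _ hb; rw [if_neg, zero_mul]; intro hb0; exact hb (Fin.ext hb0)
        · simp
      next h =>
        apply Finset.sum_eq_zero; intro j _
        rw [if_neg, zero_mul]
        exact fun hj => h (hj ▸ j.isLt)
    rw [s1, s2, s3] at h1
    by_cases h : (i:ℕ)+1 < m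
    · rw [dif_pos h]
      rw [dif_pos h] at h1
      have h2 : (1-a) * f i = (1-a) * (q i * f ⟨0, hm⟩ + f ⟨(i:ℕ)+1, h⟩) := by nlinarith [h1]
      exact mul_left_cancel₀ ha1 h2
    · rw [dif_neg h]
      rw [dif_neg h] at h1
      have h2 : (1-a) * f i = (1-a) * (q i * f ⟨0, hm⟩ + 0) := by nlinarith [h1]
      exact mul_left_cancel₀ ha1 h2
  have main : ∀ n : ℕ, ∀ i : Fin m, m - (i:ℕ) ≤ n → f i = tailQ m q i * f ⟨0, hm⟩ := by
    intro n
    induction n with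
    | zero => intro i h; exact absurd h (by have := i.isLt; omega)
    | succ n ih =>
      intro i h
      by_cases hlt : (i:ℕ)+1 < m
      · have hrec := key i
        rw [dif_pos hlt] at hrec
        have hnext := ih ⟨(i:ℕ)+1, hlt⟩ (by simp; omega)
        have hIci : Finset.Ici i = insert i (Finset.Ici (⟨(i:ℕ)+1, hlt⟩ : Fin m)) := by
          ext k
          simp only [Finset.mem_Ici, Finset.mem_insert, Fin.le_def, Fin.ext_iff]
          omega
        have hnotmem : i ∉ Finset.Ici (⟨(i:ℕ)+1, hlt⟩ : Fin m) := by
          simp [Fin.le_def]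
        rw [hrec, hnext, tailQ, tailQ, hIci, Finset.sum_insert hnotmem]
        ring
      · have hrec := key i
        rw [dif_neg hlt] at hrec
        have hIci : Finset.Ici i = {i} := by
          ext k
          have := k.isLt
          simp only [Finset.mem_Ici, Finset.mem_singleton, Fin.le_def, Fin.ext_iff]
          omega
        rw [hrec, tailQ, hIci, Finset.sum_singleton]
        ring
  have main' : ∀ s, f s = tailQ m q s * f ⟨0, hm⟩ := fun s => main (m - s) s le_rfl
  refine ⟨main', ?_⟩
  have hone : (∑ s, tailQ m q s) * f ⟨0, hm⟩ = 1 := by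
    rw [Finset.sum_mul, ← hsum]
    exact Finset.sum_congr rfl fun s _ => (main' s).symm
  exact eq_inv_of_mul_eq_one_right hone
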